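/- Let G be a profinite group and N a closed normal subgroup of G. If N (with the subspace topology) and the quotient topological group G/N are both slim, then G is slim. -/

import Mathlib

/-- A topological group is *slim* if every open subgroup has trivial center. -/
def IsSlim (G : Type*) [Group G] [TopologicalSpace G] : Prop :=
  ∀ H : Subgroup G, IsOpen (H : Set G) → Subgroup.center ↥H = ⊥

/-- An extension of slim profinite groups is slim: if `G` is a profinite group
(compact, Hausdorff, totally disconnected topological group) and `N` is a closed
normal subgroup such that both `N` (with the subspace topology) and the quotient
topological group `G ⧸ N` are slim, then `G` is slim. -/
theorem slim_of_slim_normal_of_slim_quotient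
    {G : Type*} [Group G] [TopologicalSpace G] [IsTopologicalGroup G]
    [CompactSpace G] [T2Space G] [TotallyDisconnectedSpace G]
    (N : Subgroup G) [N.Normal] (hNclosed : IsClosed (N : Set G))
    (hN : IsSlim ↥N) (hQ : IsSlim (G ⧸ N)) : IsSlim G := by
  intro H hH
  rw [Subgroup.eq_bot_iff_forall]
  rintro ⟨z, hzH⟩ hz
  rw [Subgroup.mem_center_iff] at hz
  have hcomm : ∀ h ∈ H, h * z = z * h := by
    intro h hh
    have := hz ⟨h, hh⟩
    exact congrArg Subtype.val this
  -- Step 1: z ∈ N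
  have hzN : z ∈ N := by
    have hopen : IsOpen ((H.map (QuotientGroup.mk' N) : Subgroup (G ⧸ N)) : Set (G ⧸ N)) := by
      have h2 : IsOpen (QuotientGroup.mk '' (H : Set G) : Set (G ⧸ N)) :=
        QuotientGroup.isOpenMap_coe _ hH
      exact h2
    have hc := hQ _ hopen
    have hmem : (QuotientGroup.mk z : G ⧸ N) ∈ H.map (QuotientGroup.mk' N) := ⟨z, hzH, rfl⟩
    have hcen : (⟨QuotientGroup.mk z, hmem⟩ : ↥(H.map (QuotientGroup.mk' N))) ∈
        Subgroup.center _ := by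
      rw [Subgroup.mem_center_iff]
      rintro ⟨y, hy⟩
      obtain ⟨h, hh, rfl⟩ := hy
      ext
      show (QuotientGroup.mk h : G ⧸ N) * QuotientGroup.mk z
          = QuotientGroup.mk z * QuotientGroup.mk h
      rw [← QuotientGroup.mk_mul, ← QuotientGroup.mk_mul, hcomm h hh]
    rw [hc, Subgroup.mem_bot] at hcen
    have h1 : (QuotientGroup.mk z : G ⧸ N) = 1 := congrArg Subtype.val hcen
    exact (QuotientGroup.eq_one_iff z).mp h1
  -- Step 2: z = 1
  have hopenN : IsOpen ((H.subgroupOf N : Subgroup ↥N) : Set ↥N) := by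
    have : ((H.subgroupOf N : Subgroup ↥N) : Set ↥N) = Subtype.val ⁻¹' (H : Set G) := rfl
    rw [this]
    exact hH.preimage continuous_subtype_val
  have hc := hN _ hopenN
  have hmem : (⟨z, hzN⟩ : ↥N) ∈ H.subgroupOf N := hzH
  have hcen : (⟨⟨z, hzN⟩, hmem⟩ : ↥(H.subgroupOf N)) ∈ Subgroup.center _ := by
    rw [Subgroup.mem_center_iff]
    rintro ⟨⟨w, hwN⟩, hw⟩
    ext
    exact hcomm w hw
  rw [hc, Subgroup.mem_bot] at hcen
  have hz1 : z = 1 := congrArg (fun x => ((x : ↥N) : G)) (congrArg Subtype.val hcen)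
  exact Subtype.ext hz1
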